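/- Let g be a smooth Riemannian metric on an open set U ⊆ E, let f : E → ℝ be smooth with g-gradient G, let λ : U → ℝ be smooth, and let Γ be a connection on U that straightens f with factor λ, with non-metricity tensor C. Then along every gradient descent curve γ of f one has, for all t: deriv (deriv (f ∘ γ)) t = − C (γ t) (deriv γ t) (deriv γ t) (deriv γ t) − 2 * λ (γ t) * deriv (f ∘ γ) t. (In particular, if λ ≡ 0 then the second derivative of f along the flow equals minus the non-metricity component C(γ̇, γ̇, γ̇).) -/

import Mathlib

open scoped Topology

noncomputable section

/-- `E n` is the Euclidean space `ℝ^n`. -/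
abbrev E (n : ℕ) := EuclideanSpace ℝ (Fin n)

set_option maxHeartbeats 2000000 in
/-- **Eq. (7) of the paper.** Along every gradient descent curve `γ` of `f`, for a connection
straightening `f` with factor `λ` and non-metricity tensor `C`, one has
`(f ∘ γ)'' = −C(γ̇, γ̇, γ̇) − 2 λ(γ) (f ∘ γ)'`. -/
theorem second_derivative_along_gradient_flow
    (n : ℕ) (hn : 1 ≤ n)
    (U : Set (E n)) (hU : IsOpen U)
    -- a smooth Riemannian metric on `U`
    (g : E n → E n →L[ℝ] E n →L[ℝ] ℝ)
    (hg_smooth : ContDiffOn ℝ (⊤ : ℕ∞) g U)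
    (hg_symm : ∀ x ∈ U, ∀ u v : E n, g x u v = g x v u)
    (hg_pos : ∀ x ∈ U, ∀ v : E n, v ≠ 0 → 0 < g x v v)
    -- a smooth function `f` with `g`-gradient `G`
    (f : E n → ℝ) (hf : ContDiff ℝ (⊤ : ℕ∞) f)
    (G : E n → E n) (hG_smooth : ContDiffOn ℝ (⊤ : ℕ∞) G U)
    (hG : ∀ x ∈ U, ∀ v : E n, g x (G x) v = fderiv ℝ f x v)
    -- a smooth factor `λ`
    (lam : E n → ℝ) (hlam : ContDiffOn ℝ (⊤ : ℕ∞) lam U)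
    -- a connection `Γ` on `U` straightening `f` with factor `λ`
    (Γ : E n → E n →L[ℝ] E n →L[ℝ] E n)
    (hΓ_smooth : ContDiffOn ℝ (⊤ : ℕ∞) Γ U)
    (hstr : ∀ x ∈ U, fderiv ℝ G x (G x) + Γ x (G x) (G x) = lam x • G x)
    -- the non-metricity tensor `C` of `Γ` relative to `g`
    (C : E n → E n → E n → E n → ℝ)
    (hC : ∀ x ∈ U, ∀ w u v : E n,
      C x w u v = fderiv ℝ (fun y => g y u v) x w - g x (Γ x w u) v - g x u (Γ x w v)) :
    -- along every gradient descent curve of `f`: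
    ∀ γ : ℝ → E n, (∀ t : ℝ, γ t ∈ U) → ContDiff ℝ 1 γ →
      (∀ t : ℝ, deriv γ t = -G (γ t)) →
      ∀ t : ℝ,
        deriv (deriv (f ∘ γ)) t
          = -C (γ t) (deriv γ t) (deriv γ t) (deriv γ t)
            - 2 * lam (γ t) * deriv (f ∘ γ) t := by
  intro γ hγU hγC1 hγ' t
  have hgd : ∀ s : ℝ, DifferentiableAt ℝ g (γ s) := fun s =>
    ((hg_smooth.contDiffAt (hU.mem_nhds (hγU s))).differentiableAt (by simp))
  have hGd : ∀ s : ℝ, DifferentiableAt ℝ G (γ s) := fun s =>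
    ((hG_smooth.contDiffAt (hU.mem_nhds (hγU s))).differentiableAt (by simp))
  have hγd : ∀ s : ℝ, HasDerivAt γ (deriv γ s) s := fun s =>
    ((hγC1.differentiable one_ne_zero) s).hasDerivAt
  set h : E n → ℝ := fun x => g x (G x) (G x) with hh_def
  -- first derivative of f ∘ γ
  have hfd1 : ∀ s : ℝ, HasDerivAt (f ∘ γ) (-(h (γ s))) s := by
    intro s
    have h1 : HasDerivAt (f ∘ γ) (fderiv ℝ f (γ s) (deriv γ s)) s :=
      ((hf.differentiable (by simp) (γ s)).hasFDerivAt).comp_hasDerivAt s (hγd s)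
    have h2 : fderiv ℝ f (γ s) (deriv γ s) = -(h (γ s)) := by
      rw [← hG (γ s) (hγU s), hγ' s]
      simp [hh_def]
    rwa [h2] at h1
  have hderiv1 : deriv (f ∘ γ) = fun s => -(h (γ s)) := funext fun s => (hfd1 s).deriv
  -- derivative of h at x := γ t
  set x := γ t with hx
  set g' := fderiv ℝ g x with hg'
  set G' := fderiv ℝ G x with hG'
  have hc1 : HasFDerivAt (fun y => g y (G y)) ((g x).comp G' + g'.flip (G x)) x :=
    (hgd t).hasFDerivAt.clm_apply (hGd t).hasFDerivAt
  have hhd : HasFDerivAt h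
      ((g x (G x)).comp G' + ((g x).comp G' + g'.flip (G x)).flip (G x)) x :=
    hc1.clm_apply (hGd t).hasFDerivAt
  set D := (g x (G x)).comp G' + ((g x).comp G' + g'.flip (G x)).flip (G x) with hD
  -- second derivative
  have h2d : HasDerivAt (deriv (f ∘ γ)) (-(D (deriv γ t))) t := by
    rw [hderiv1]
    exact ((hhd.comp_hasDerivAt t (hγd t)).neg)
  have hLHS : deriv (deriv (f ∘ γ)) t = -(D (deriv γ t)) := h2d.deriv
  -- fderiv of y ↦ g y u v
  have hgf : ∀ u v w : E n, fderiv ℝ (fun y => g y u v) x w = g' w u v := by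
    intro u v w
    have e1 : fderiv ℝ (fun y => g y u) x = g'.flip u := by
      rw [fderiv_clm_apply (hgd t) (differentiableAt_const u)]
      simp
      rfl
    have e2 : fderiv ℝ (fun y => (fun y => g y u) y v) x
        = ((fun y => g y u) x).comp (fderiv ℝ (fun _ : E n => v) x)
          + (fderiv ℝ (fun y => g y u) x).flip v :=
      fderiv_clm_apply (by
        have : DifferentiableAt ℝ (fun y => g y u) x :=
          (hgd t).clm_apply (differentiableAt_const u)
        exact this) (differentiableAt_const v)
    simp only [fderiv_const] at e2
    rw [e2, e1]
    simp
  -- assemble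
  have hxU : x ∈ U := hγU t
  have hstr' : G' (G x) = lam x • G x - Γ x (G x) (G x) := by
    have h0 := hstr x hxU
    rw [← hG'] at h0
    exact eq_sub_of_add_eq h0
  rw [hLHS, hC x hxU, hγ' t, ← hx, hderiv1]
  simp only [hgf, hD, ContinuousLinearMap.add_apply, ContinuousLinearMap.comp_apply,
    ContinuousLinearMap.flip_apply, map_neg, ContinuousLinearMap.neg_apply, hstr',
    map_sub, map_smul, ContinuousLinearMap.sub_apply, ContinuousLinearMap.smul_apply,
    smul_eq_mul]
  have hsymm := hg_symm x hxU (Γ x (G x) (G x)) (G x)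
  ring_nf
  rw [hsymm, ← hgf]

end
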